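/- Let X be a linear subspace of the Banach space of bounded functions [0,1] → ℝ with supremum norm, such that for each nonempty open subset U of [0,1] there exists f ∈ X for which C(f) is not residual in U. Then {f ∈ X : C(f) is nowhere dense in [0,1]} is a residual G_δ subset of X. -/

import Mathlib

open Set

namespace Stmt8Aux

abbrev I01 := Set.Icc (0:ℝ) 1
noncomputable abbrev E := lp (fun _ : I01 => ℝ) ⊤

def Osc (g : I01 → ℝ) (ε : ℝ) : Set I01 :=
  {x | ∃ U : Set I01, IsOpen U ∧ x ∈ U ∧ ∀ y ∈ U, ∀ z ∈ U, |g y - g z| < ε}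

lemma isOpen_Osc (g : I01 → ℝ) (ε : ℝ) : IsOpen (Osc g ε) := by
  rw [isOpen_iff_forall_mem_open]
  rintro x ⟨U, hU, hxU, hUb⟩
  exact ⟨U, fun y hy => ⟨U, hU, hy, hUb⟩, hU, hxU⟩

lemma cont_subset_Osc (g : I01 → ℝ) {ε : ℝ} (hε : 0 < ε) :
    {x | ContinuousAt g x} ⊆ Osc g ε := by
  intro x hx
  obtain ⟨δ, hδ, hb⟩ := Metric.continuousAt_iff.1 hx (ε/2) (by linarith)
  refine ⟨Metric.ball x δ, Metric.isOpen_ball, Metric.mem_ball_self hδ, ?_⟩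
  intro y hy z hz
  have h1 := hb hy
  have h2 := hb hz
  rw [Real.dist_eq] at h1 h2
  calc |g y - g z| ≤ |g y - g x| + |g x - g z| := abs_sub_le _ _ _
    _ = |g y - g x| + |g z - g x| := by rw [abs_sub_comm (g x)]
    _ < ε/2 + ε/2 := by exact add_lt_add h1 h2
    _ = ε := by ring

lemma iInter_Osc_subset (g : I01 → ℝ) :
    (⋂ n : ℕ, Osc g (1/(n+1))) ⊆ {x | ContinuousAt g x} := by
  intro x hx
  rw [mem_setOf_eq, Metric.continuousAt_iff]
  intro ε hε
  obtain ⟨n, hn⟩ := exists_nat_one_div_lt hε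
  obtain ⟨U, hU, hxU, hUb⟩ := mem_iInter.1 hx n
  obtain ⟨δ, hδ, hball⟩ := Metric.isOpen_iff.1 hU x hxU
  refine ⟨δ, hδ, fun {y} hy => ?_⟩
  rw [Real.dist_eq]
  exact lt_trans (hUb y (hball hy) x hxU) hn

lemma Osc_perturb {g g' : I01 → ℝ} {δ ε : ℝ} (h : ∀ x, |g x - g' x| ≤ δ) :
    Osc g' ε ⊆ Osc g (ε + 2*δ) := by
  rintro x ⟨U, hU, hxU, hUb⟩
  refine ⟨U, hU, hxU, fun y hy z hz => ?_⟩
  calc |g y - g z| ≤ |g y - g' y| + |g' y - g' z| + |g' z - g z| := by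
        have := abs_sub_le (g y) (g' y) (g z)
        have := abs_sub_le (g' y) (g' z) (g z)
        linarith [abs_sub_le (g y) (g' y) (g z), abs_sub_le (g' y) (g' z) (g z)]
    _ < δ + ε + δ := by
        have h1 := h y
        have h2 := h z
        rw [abs_sub_comm (g z)] at h2
        exact add_lt_add_of_lt_of_le (add_lt_add_of_le_of_lt h1 (hUb y hy z hz)) h2
    _ = ε + 2*δ := by ring

lemma open_subset_closure_inter {α : Type*} [TopologicalSpace α] {V S : Set α}
    (hV : IsOpen V) (h : V ⊆ closure S) : V ⊆ closure (S ∩ V) := by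
  intro x hx
  rw [mem_closure_iff]
  intro o ho hxo
  rcases mem_closure_iff.1 (h hx) (o ∩ V) (ho.inter hV) ⟨hxo, hx⟩ with ⟨y, ⟨hyo, hyV⟩, hyS⟩
  exact ⟨y, hyo, hyS, hyV⟩

lemma dense_cont_of_dense_Osc {V : Set I01} (hV : IsOpen V) (g : I01 → ℝ)
    (h : ∀ ε : ℝ, 0 < ε → V ⊆ closure (Osc g ε)) :
    V ⊆ closure {x | ContinuousAt g x} := by
  set D : ℕ → Set I01 := fun n => Osc g (1/(n+1)) ∪ (closure V)ᶜ with hD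
  have hDo : ∀ n, IsOpen (D n) := fun n =>
    (isOpen_Osc _ _).union isClosed_closure.isOpen_compl
  have hDd : ∀ n, Dense (D n) := by
    intro n x
    by_cases hx : x ∈ closure V
    · have h1 : closure V ⊆ closure (Osc g (1/(n+1))) :=
        closure_minimal (h _ (by positivity)) isClosed_closure
      exact closure_mono subset_union_left (h1 hx)
    · exact subset_closure (Or.inr hx)
  have hdense : Dense (⋂ n, D n) := dense_iInter_of_isOpen hDo hDd
  have key : (⋂ n, D n) ∩ V ⊆ {x | ContinuousAt g x} := by
    rintro x ⟨hxD, hxV⟩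
    apply iInter_Osc_subset g
    rw [mem_iInter]
    intro n
    rcases mem_iInter.1 hxD n with h1 | h1
    · exact h1
    · exact absurd (subset_closure hxV) h1
  calc V ⊆ closure ((⋂ n, D n) ∩ V) :=
        open_subset_closure_inter hV (fun x _ => hdense x)
    _ ⊆ closure {x | ContinuousAt g x} := closure_mono key


lemma dense_preimage {V S : Set I01} (hV : IsOpen V) (h : V ⊆ closure S) :
    Dense (Subtype.val ⁻¹' S : Set V) := by
  intro x
  rw [closure_subtype, Subtype.image_preimage_coe, inter_comm]
  exact open_subset_closure_inter hV h x.2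

lemma isClosed_F {V : Set I01} (hV : IsOpen V) :
    IsClosed {g : E | V ⊆ closure {x | ContinuousAt (⇑g) x}} := by
  rw [← closure_subset_iff_isClosed]
  intro f hf
  apply dense_cont_of_dense_Osc hV
  intro ε hε
  obtain ⟨g, hgF, hfg⟩ := Metric.mem_closure_iff.1 hf (ε/4) (by positivity)
  have hpt : ∀ x, |(⇑f : I01 → ℝ) x - (⇑g : I01 → ℝ) x| ≤ ε/4 := by
    intro x
    have h1 := lp.norm_apply_le_norm (p := ⊤) (by simp) (f - g) x
    rw [lp.coeFn_sub] at h1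
    simp only [Pi.sub_apply, Real.norm_eq_abs] at h1
    rw [dist_eq_norm] at hfg
    linarith
  calc V ⊆ closure {x | ContinuousAt (⇑g : I01 → ℝ) x} := hgF
    _ ⊆ closure (Osc (⇑g) (ε/2)) := closure_mono (cont_subset_Osc _ (by positivity))
    _ ⊆ closure (Osc (⇑f) ε) := by
        apply closure_mono
        have h2 := Osc_perturb (g := ⇑f) (g' := ⇑g) (ε := ε/2) hpt
        rw [show ε/2 + 2*(ε/4) = ε by ring] at h2
        exact h2


lemma residual_cont {V : Set I01} (hV : IsOpen V) (g : E)
    (hg : V ⊆ closure {x | ContinuousAt (⇑g) x}) :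
    (Subtype.val ⁻¹' {x | ContinuousAt (⇑g) x} : Set V) ∈ residual V := by
  refine residual_of_dense_Gδ ?_ (dense_preimage hV hg)
  have heq : (Subtype.val ⁻¹' {x | ContinuousAt (⇑g) x} : Set V)
      = {x : V | ContinuousAt ((⇑g) ∘ Subtype.val) x} := by
    ext x
    simp only [mem_preimage, mem_setOf_eq]
    exact (hV.isOpenEmbedding_subtypeVal.continuousAt_iff).symm
  rw [heq]
  exact IsGδ.setOf_continuousAt _

end Stmt8Aux

open Stmt8Aux

theorem stmt_8 (X : Submodule ℝ (lp (fun _ : Set.Icc (0:ℝ) 1 => ℝ) ⊤))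
    (hX : ∀ U : Set (Set.Icc (0:ℝ) 1), IsOpen U → U.Nonempty →
      ∃ f ∈ X, ¬ IsMeagre
        (Subtype.val ⁻¹' {x | ¬ ContinuousAt (⇑f) x} : Set U)) :
    IsGδ {f : X | IsNowhereDense
        {x : Set.Icc (0:ℝ) 1 | ContinuousAt (⇑(f : lp (fun _ : Set.Icc (0:ℝ) 1 => ℝ) ⊤)) x}} ∧
    IsMeagre {f : X | IsNowhereDense
        {x : Set.Icc (0:ℝ) 1 | ContinuousAt (⇑(f : lp (fun _ : Set.Icc (0:ℝ) 1 => ℝ) ⊤)) x}}ᶜ := by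
  classical
  obtain ⟨B, hBc, hBne, hBb⟩ := TopologicalSpace.exists_countable_basis I01
  set Cs : X → Set I01 := fun f => {x | ContinuousAt (⇑(f : E)) x} with hCs
  set F : Set I01 → Set X := fun V => {f : X | V ⊆ closure (Cs f)} with hFdef
  have hFclosed : ∀ V : Set I01, IsOpen V → IsClosed (F V) := by
    intro V hV
    have : F V = (Subtype.val : X → E) ⁻¹'
        {g : E | V ⊆ closure {x | ContinuousAt (⇑g) x}} := rfl
    rw [this]
    exact (isClosed_F hV).preimage continuous_subtype_val
  have hFint : ∀ V : Set I01, IsOpen V → V.Nonempty → interior (F V) = ∅ := by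
    intro V hV hVne
    rw [← not_nonempty_iff_eq_empty]
    rintro ⟨f₀, hf₀⟩
    obtain ⟨r, hr, hball⟩ := Metric.isOpen_iff.1 isOpen_interior f₀ hf₀
    have hball' : Metric.ball f₀ r ⊆ F V := fun x hx => interior_subset (hball hx)
    obtain ⟨h, hhX, hhM⟩ := hX V hV hVne
    set c : ℝ := r / (2 * (‖h‖ + 1)) with hc
    have hc0 : 0 < c := by positivity
    set f₁ : X := f₀ + ⟨c • h, X.smul_mem c hhX⟩ with hf₁def
    have hf₀mem : f₀ ∈ F V := hball' (Metric.mem_ball_self hr)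
    have hf₁mem : f₁ ∈ F V := by
      apply hball'
      rw [Metric.mem_ball, dist_eq_norm]
      have he : f₁ - f₀ = ⟨c • h, X.smul_mem c hhX⟩ := by rw [hf₁def]; abel
      rw [he, Submodule.coe_norm, norm_smul, Real.norm_eq_abs, abs_of_pos hc0, hc,
        div_mul_eq_mul_div, div_lt_iff₀ (by positivity)]
      nlinarith [norm_nonneg h]
    -- the key pointwise fact
    have hfun : (⇑h : I01 → ℝ) = fun y => c⁻¹ * ((⇑(f₁ : E) : I01 → ℝ) y - (⇑(f₀ : E) : I01 → ℝ) y) := by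
      funext y
      have h1 : (f₁ : E) = (f₀ : E) + c • h := by rw [hf₁def]; rfl
      rw [h1, lp.coeFn_add, lp.coeFn_smul]
      simp only [Pi.add_apply, Pi.smul_apply, smul_eq_mul]
      field_simp
      ring
    apply hhM
    rw [IsMeagre]
    have hsub : (Subtype.val ⁻¹' (Cs f₀) : Set V) ∩ (Subtype.val ⁻¹' (Cs f₁)) ⊆
        (Subtype.val ⁻¹' {x | ¬ ContinuousAt (⇑h) x} : Set V)ᶜ := by
      rintro x ⟨hx0, hx1⟩
      simp only [mem_compl_iff, mem_preimage, mem_setOf_eq, not_not]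
      rw [hfun]
      exact continuousAt_const.mul ((hx1 : ContinuousAt _ _).sub (hx0 : ContinuousAt _ _))
    exact Filter.mem_of_superset
      (Filter.inter_mem (residual_cont hV _ hf₀mem) (residual_cont hV _ hf₁mem)) hsub
  -- decomposition of the complement
  have hcompl : {f : X | IsNowhereDense (Cs f)}ᶜ = ⋃ V ∈ B, F V := by
    ext f
    simp only [mem_compl_iff, mem_setOf_eq, mem_iUnion, exists_prop]
    constructor
    · intro hnd
      rw [IsNowhereDense, ← ne_eq, ← nonempty_iff_ne_empty] at hnd
      obtain ⟨x, hx⟩ := hnd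
      obtain ⟨V, hVB, _, hVsub⟩ := hBb.exists_subset_of_mem_open hx isOpen_interior
      exact ⟨V, hVB, hVsub.trans interior_subset⟩
    · rintro ⟨V, hVB, hsub⟩ hnd
      have hVo : IsOpen V := hBb.isOpen hVB
      have hVne : V.Nonempty := by
        rw [nonempty_iff_ne_empty]; rintro rfl; exact hBne hVB
      have : V ⊆ interior (closure (Cs f)) := interior_maximal hsub hVo
      rw [hnd] at this
      exact hVne.not_subset_empty this
  constructor
  · have hT : {f : X | IsNowhereDense (Cs f)} = ⋂ V ∈ B, (F V)ᶜ := by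
      rw [← compl_compl {f : X | IsNowhereDense (Cs f)}, hcompl, compl_iUnion]
      simp only [compl_iUnion]
    rw [hT]
    exact IsGδ.biInter hBc fun V hV =>
      ((hFclosed V (hBb.isOpen hV)).isOpen_compl).isGδ
  · rw [hcompl, IsMeagre, compl_iUnion]
    simp only [compl_iUnion]
    rw [countable_bInter_mem hBc]
    intro V hVB
    have hVo : IsOpen V := hBb.isOpen hVB
    have hVne : V.Nonempty := by
      rw [nonempty_iff_ne_empty]; rintro rfl; exact hBne hVB
    refine residual_of_dense_open (hFclosed V hVo).isOpen_compl ?_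
    rw [← interior_eq_empty_iff_dense_compl]
    exact hFint V hVo hVne
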